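/- Let w be a finite word with the following property: for every non-palindromic factor u of w, the longest palindromic prefix p of u and the longest palindromic suffix q of u satisfy p ≠ q, neither p nor q is a factor of the other, and any two non-palindromic factors of w with the same longest palindromic prefix and the same longest palindromic suffix are equal. Then w is rich. -/

import Mathlib

/-- The finset of (distinct) palindromic factors of a finite word `w`,
including the empty word. -/
def palFactors {A : Type*} [DecidableEq A] (w : List A) : Finset (List A) :=
  ((w.inits.flatMap List.tails).filter (fun u => u.reverse = u)).toFinset

/-- A finite word `w` is rich if it has exactly `|w| + 1` distinct palindromic factors. -/
def Rich {A : Type*} [DecidableEq A] (w : List A) : Prop :=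
  (palFactors w).card = w.length + 1

/-- `p` is the longest palindromic prefix of `u`. -/
def LongestPalPrefix {A : Type*} (p u : List A) : Prop :=
  p <+: u ∧ p.reverse = p ∧ ∀ p' : List A, p' <+: u → p'.reverse = p' → p'.length ≤ p.length

/-- `q` is the longest palindromic suffix of `u`. -/
def LongestPalSuffix {A : Type*} (q u : List A) : Prop :=
  q <:+ u ∧ q.reverse = q ∧ ∀ q' : List A, q' <:+ u → q'.reverse = q' → q'.length ≤ q.length

section RichAux

variable {A : Type*}

lemma infix_iff_suffix_prefix' {u w : List A} : u <:+: w ↔ ∃ t, u <:+ t ∧ t <+: w := by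
  constructor
  · rintro ⟨s, t, rfl⟩
    exact ⟨s ++ u, ⟨s, rfl⟩, ⟨t, by simp⟩⟩
  · rintro ⟨t, ⟨s, rfl⟩, ⟨r, rfl⟩⟩
    exact ⟨s, r, by simp⟩

lemma mem_palFactors [DecidableEq A] {u w : List A} :
    u ∈ palFactors w ↔ u <:+: w ∧ u.reverse = u := by
  simp only [palFactors, List.mem_toFinset, List.mem_filter, List.mem_flatMap,
    List.mem_inits, List.mem_tails, decide_eq_true_eq]
  rw [infix_iff_suffix_prefix']
  tauto

lemma exists_lpp [DecidableEq A] (u : List A) : ∃ p, LongestPalPrefix p u := by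
  classical
  have hne : ((u.inits.filter (fun p => decide (p.reverse = p))).toFinset).Nonempty := by
    refine ⟨[], ?_⟩
    simp [List.mem_filter]
  obtain ⟨p, hp, hmax⟩ := Finset.exists_max_image _ (fun p : List A => p.length) hne
  simp only [List.mem_toFinset, List.mem_filter, List.mem_inits, decide_eq_true_eq] at hp
  refine ⟨p, hp.1, hp.2, fun p' h1 h2 => ?_⟩
  apply hmax
  simp [List.mem_filter, h1, h2]

lemma exists_lps [DecidableEq A] (u : List A) : ∃ q, LongestPalSuffix q u := by
  obtain ⟨p, hp, hpal, hmax⟩ := exists_lpp u.reverse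
  have hps : p <:+ u := by
    have h := List.reverse_suffix.2 hp
    rwa [hpal, List.reverse_reverse] at h
  refine ⟨p, hps, hpal, fun q' h1 h2 => ?_⟩
  have h1' : q' <+: u.reverse := by
    have h := List.reverse_prefix.2 h1
    rwa [h2] at h
  exact hmax q' h1' h2

lemma suffix_of_suffix_length_le' {s q u : List A} (h1 : s <:+ u) (h2 : q <:+ u)
    (h : s.length ≤ q.length) : s <:+ q := by
  rw [← List.reverse_prefix] at h1 h2 ⊢
  exact List.prefix_of_prefix_length_le h1 h2 (by simpa using h)

lemma complete_return_pal [DecidableEq A] {w u q : List A}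
    (h1 : ∀ u p q : List A, u <:+: w → u.reverse ≠ u →
      LongestPalPrefix p u → LongestPalSuffix q u →
      p ≠ q ∧ ¬ p <:+: q ∧ ¬ q <:+: p)
    (hu : u <:+: w) (hnp : u.reverse ≠ u) (hq : q.reverse = q)
    (hpre : q <+: u) (hsuf : q <:+ u)
    (htwice : ∀ s t : List A, u = s ++ q ++ t → s = [] ∨ t = []) : False := by
  obtain ⟨p, hpP, hpPal, hpMax⟩ := exists_lpp u
  obtain ⟨q', hqS, hqPal, hqMax⟩ := exists_lps u
  have hqp : q <+: p := List.prefix_of_prefix_length_le hpre hpP (hpMax q hpre hq)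
  have hqps : q <:+ p := by
    have h := List.reverse_suffix.2 hqp
    rwa [hq, hpPal] at h
  have hpq : p = q := by
    obtain ⟨s', hs'⟩ := hqps
    obtain ⟨r, hr⟩ := hpP
    rcases htwice s' r (by rw [← hr, ← hs']) with h | h
    · rw [← hs', h]; simp
    · exfalso; apply hnp; rw [← hr, h]; simp [hpPal]
  have hq'q : q' = q := by
    have hqq' : q <:+ q' := suffix_of_suffix_length_le' hsuf hqS (hqMax q hsuf hq)
    have hqq'p : q <+: q' := by
      have h := List.reverse_prefix.2 hqq'
      rwa [hq, hqPal] at h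
    obtain ⟨t', ht'⟩ := hqq'p
    obtain ⟨r', hr'⟩ := hqS
    rcases htwice r' t' (by rw [← hr', ← ht']; simp) with h | h
    · exfalso; apply hnp; rw [← hr', h]; simp [hqPal]
    · rw [← ht', h]; simp
  have hfin := (h1 u p q' hu hnp ⟨hpP, hpPal, hpMax⟩ ⟨hqS, hqPal, hqMax⟩).1
  rw [hpq, hq'q] at hfin
  exact hfin rfl

lemma lps_unioccurrent [DecidableEq A] {w v q : List A}
    (h1 : ∀ u p q : List A, u <:+: w → u.reverse ≠ u →
      LongestPalPrefix p u → LongestPalSuffix q u →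
      p ≠ q ∧ ¬ p <:+: q ∧ ¬ q <:+: p)
    (hv : v <+: w) (hq : LongestPalSuffix q v) :
    ∀ s t : List A, v = s ++ q ++ t → t = [] := by
  classical
  by_contra hcon
  push_neg at hcon
  obtain ⟨s₀', t₀', hdec, hne⟩ := hcon
  set P : ℕ → Prop := fun i => ∃ s t : List A, v = s ++ q ++ t ∧ t ≠ [] ∧ s.length = i with hP
  have hbound : ∀ i, P i → i ≤ v.length := by
    rintro i ⟨s, t, hd, -, rfl⟩; rw [hd]; simp
  have hP0 : P s₀'.length := ⟨s₀', t₀', hdec, hne, rfl⟩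
  have hPg : P (Nat.findGreatest P v.length) :=
    Nat.findGreatest_spec (hbound _ hP0) hP0
  obtain ⟨s₀, t₀, hd₀, ht₀, hlen₀⟩ := hPg
  set u := q ++ t₀ with hu
  have husuf : u <:+ v := ⟨s₀, by rw [hd₀, hu]; simp⟩
  have huw : u <:+: w := husuf.isInfix.trans hv.isInfix
  have hupre : q <+: u := ⟨t₀, rfl⟩
  have hqlen : q.length < u.length := by
    have := List.length_pos_iff.2 ht₀
    simp only [hu, List.length_append]
    omega
  have hunp : u.reverse ≠ u := by
    intro hpal
    have := hq.2.2 u husuf hpal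
    omega
  have husuf' : q <:+ u := suffix_of_suffix_length_le' hq.1 husuf (le_of_lt hqlen)
  refine complete_return_pal h1 huw hunp hq.2.1 hupre husuf' ?_
  rintro s'' t'' hd''
  by_contra hc
  push_neg at hc
  obtain ⟨hs'', ht''⟩ := hc
  have hnew : P (s₀.length + s''.length) := by
    refine ⟨s₀ ++ s'', t'', ?_, ht'', by simp⟩
    have hv2 : v = s₀ ++ u := by rw [hd₀, hu]; simp
    rw [hv2, hd'']
    simp
  have hpos : 0 < s''.length := List.length_pos_iff.2 hs''
  exact Nat.findGreatest_is_greatest (by omega) (hbound _ hnew) hnew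

end RichAux

/-- Suppose `w` is a finite word such that for every non-palindromic factor `u` of `w`,
the longest palindromic prefix `p` and the longest palindromic suffix `q` of `u`
satisfy `p ≠ q` and neither is a factor of the other, and any two non-palindromic
factors of `w` with the same longest palindromic prefix and the same longest
palindromic suffix are equal. Then `w` is rich. -/
theorem rich_of_unique_pal_prefix_suffix_determination {A : Type*} [DecidableEq A]
    (w : List A)
    (h1 : ∀ u p q : List A, u <:+: w → u.reverse ≠ u →
      LongestPalPrefix p u → LongestPalSuffix q u →
      p ≠ q ∧ ¬ p <:+: q ∧ ¬ q <:+: p)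
    (h2 : ∀ u v p q : List A, u <:+: w → v <:+: w → u.reverse ≠ u → v.reverse ≠ v →
      LongestPalPrefix p u → LongestPalPrefix p v →
      LongestPalSuffix q u → LongestPalSuffix q v → u = v) :
    Rich w := by
  suffices h : ∀ v : List A, v <+: w → (palFactors v).card = v.length + 1 by
    exact h w (List.prefix_refl w)
  intro v
  induction v using List.reverseRecOn with
  | nil =>
    intro _
    simp [palFactors]
  | append_singleton v' a ih =>
    intro hvw
    have hv'w : v' <+: w := (List.prefix_append v' [a]).trans hvw
    obtain ⟨q, hq⟩ := exists_lps (v' ++ [a])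
    have hqsub : q <:+: v' ++ [a] := hq.1.isInfix
    have huni := lps_unioccurrent h1 hvw hq
    have hqnot : q ∉ palFactors v' := by
      rw [mem_palFactors]
      rintro ⟨⟨s, t, hst⟩, -⟩
      have hd : v' ++ [a] = s ++ q ++ (t ++ [a]) := by rw [← hst]; simp
      have := huni s (t ++ [a]) hd
      simp at this
    have hsub1 : palFactors (v' ++ [a]) ⊆ insert q (palFactors v') := by
      intro x hx
      rw [mem_palFactors] at hx
      obtain ⟨hxinf, hxpal⟩ := hx
      rw [Finset.mem_insert]
      by_cases hx' : x <:+: v'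
      · exact Or.inr (mem_palFactors.2 ⟨hx', hxpal⟩)
      · obtain ⟨t, hxs, htp⟩ := infix_iff_suffix_prefix'.1 hxinf
        have ht' : t = v' ++ [a] := by
          by_contra hne
          apply hx'
          have hlt : t.length ≤ v'.length := by
            have h := htp.length_le
            simp only [List.length_append, List.length_cons, List.length_nil] at h
            rcases Nat.lt_or_ge t.length (v'.length + 1) with hlt | hge
            · omega
            · exact absurd (htp.eq_of_length_le (by simpa using hge)) hne
          have htv' : t <+: v' :=
            List.prefix_of_prefix_length_le htp (List.prefix_append v' [a]) (by simpa using hlt)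
          exact hxs.isInfix.trans htv'.isInfix
        rw [ht'] at hxs
        have hxq : x <:+ q := suffix_of_suffix_length_le' hxs hq.1 (hq.2.2 x hxs hxpal)
        by_cases hxqe : x = q
        · exact Or.inl hxqe
        · refine Or.inr (mem_palFactors.2 ⟨?_, hxpal⟩)
          have hxp : x <+: q := by
            have h := List.reverse_prefix.2 hxq
            rwa [hxpal, hq.2.1] at h
          obtain ⟨r, hr⟩ := hxp
          obtain ⟨s, hs⟩ := hq.1
          have hr0 : r ≠ [] := fun h => hxqe (by rw [← hr, h]; simp)
          have hlens : s.length + q.length = v'.length + 1 := by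
            have := congrArg List.length hs
            simpa using this
          have hlx : x.length < q.length := by
            have := congrArg List.length hr
            have hrp := List.length_pos_iff.2 hr0
            simp at this
            omega
          have h1' : s ++ x <+: v' ++ [a] := ⟨r, by rw [← hs, ← hr]; simp⟩
          have h2' : (s ++ x).length ≤ v'.length := by simp; omega
          have h3' : s ++ x <+: v' :=
            List.prefix_of_prefix_length_le h1' (List.prefix_append v' [a]) (by simpa using h2')
          obtain ⟨r', hr'⟩ := h3'
          exact ⟨s, r', by rw [← hr']⟩
    have hsub2 : insert q (palFactors v') ⊆ palFactors (v' ++ [a]) := by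
      intro x hx
      rw [Finset.mem_insert] at hx
      rcases hx with rfl | hx
      · exact mem_palFactors.2 ⟨hqsub, hq.2.1⟩
      · rw [mem_palFactors] at hx ⊢
        exact ⟨hx.1.trans (List.prefix_append v' [a]).isInfix, hx.2⟩
    have heq : palFactors (v' ++ [a]) = insert q (palFactors v') :=
      Finset.Subset.antisymm hsub1 hsub2
    rw [heq, Finset.card_insert_of_notMem hqnot, ih hv'w]
    simp
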